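/- Let n ≥ 3 and q odd. Then the equivalence '-1 ∈ ⟨q⟩ mod 2^n if and only if -1 + 2^{n-1} ∈ ⟨q⟩ mod 2^n' holds if and only if q ≢ -1 mod 2^{n-1}. -/

import Mathlib

lemma odd_factor (q : ℤ) (hq : Odd q) {j : ℕ} (hj : Odd j) :
    ∃ S : ℤ, Odd S ∧ q ^ j + 1 = (q + 1) * S := by
  refine ⟨∑ i ∈ Finset.range j, q ^ i * (-1 : ℤ) ^ (j - 1 - i), ?_, ?_⟩
  · have hcast : ((∑ i ∈ Finset.range j, q ^ i * (-1:ℤ) ^ (j-1-i) : ℤ) : ZMod 2) = 1 := by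
      push_cast
      have hq2 : ((q : ℤ) : ZMod 2) = 1 := by
        obtain ⟨k, hk⟩ := hq; subst hk; push_cast; ring_nf
        rw [show (2:ZMod 2) = 0 by decide]; ring
      obtain ⟨m, hm⟩ := hj
      simp [hq2, CharTwo.neg_eq, hm]
      exact Or.inl (by decide)
    by_contra h
    rw [Int.not_odd_iff_even] at h
    rw [(ZMod.intCast_zmod_eq_zero_iff_dvd _ 2).2 (by exact_mod_cast h.two_dvd)] at hcast
    exact one_ne_zero hcast.symm
  · have h := geom_sum₂_mul q (-1 : ℤ) j
    rw [hj.neg_one_pow] at h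
    linarith [h]

lemma odd_coprime_pow (n : ℕ) (S : ℤ) (hS : Odd S) : IsCoprime ((2:ℤ)^n) S := by
  obtain ⟨t, ht⟩ := hS
  exact IsCoprime.pow_left ⟨-t, 1, by linarith⟩

lemma odd_sq_mod8 (a : ℤ) (ha : Odd a) : (8:ℤ) ∣ a^2 - 1 := by
  obtain ⟨k, hk⟩ := ha
  obtain ⟨t, ht⟩ := Int.even_mul_succ_self k
  exact ⟨t, by subst hk; linear_combination 4*ht⟩

lemma eight_dvd (n : ℕ) (hn : 3 ≤ n) : (8:ℤ) ∣ 2^n := by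
  calc (8:ℤ) = 2^3 := by norm_num
  _ ∣ 2^n := pow_dvd_pow 2 hn

lemma key_neg_one (n : ℕ) (hn : 3 ≤ n) (q : ℤ) (hq : Odd q) :
    (∃ j : ℕ, (2:ℤ)^n ∣ q ^ j + 1) ↔ (2:ℤ)^n ∣ q + 1 := by
  constructor
  · rintro ⟨j, hj⟩
    rcases Nat.even_or_odd j with he | ho
    · exfalso
      obtain ⟨m, hm⟩ := he
      have h8 : (8:ℤ) ∣ q ^ j + 1 := dvd_trans (eight_dvd n hn) hj
      have h8' : (8:ℤ) ∣ (q^m)^2 - 1 := odd_sq_mod8 _ (hq.pow)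
      have hqq : q ^ j = (q^m)^2 := by rw [hm]; ring
      have : (8:ℤ) ∣ 2 := by
        have := dvd_sub h8 h8'
        rw [hqq] at this
        simpa using this
      norm_num at this
    · obtain ⟨S, hS, hfac⟩ := odd_factor q hq ho
      rw [hfac] at hj
      exact (odd_coprime_pow n S hS).dvd_of_dvd_mul_right hj
  · intro h; exact ⟨1, by simpa using h⟩

lemma key_other (n : ℕ) (hn : 3 ≤ n) (q : ℤ) (hq : Odd q) :
    (∃ j : ℕ, (2:ℤ)^n ∣ q ^ j + 1 - 2^(n-1)) ↔ (2:ℤ)^n ∣ q + 1 - 2^(n-1) := by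
  have hpow : (2:ℤ)^(n-1) * 2 = 2^n := by
    rw [← pow_succ]; congr 1; omega
  constructor
  · rintro ⟨j, hj⟩
    rcases Nat.even_or_odd j with he | ho
    · exfalso
      obtain ⟨m, hm⟩ := he
      have h8 : (8:ℤ) ∣ q ^ j + 1 - 2^(n-1) := dvd_trans (eight_dvd n hn) hj
      have h8' : (8:ℤ) ∣ (q^m)^2 - 1 := odd_sq_mod8 _ (hq.pow)
      have hqq : q ^ j = (q^m)^2 := by rw [hm]; ring
      have h2 : (8:ℤ) ∣ 2 - 2^(n-1) := by
        have := dvd_sub h8 h8'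
        rw [hqq] at this
        have h3 : q ^ m ^ 2 + 1 - 2 ^ (n - 1) - (q ^ m ^ 2 - 1) = 2 - 2^(n-1) := by ring
        convert this using 1
        exacts [rfl, by ring]
      rcases Nat.lt_or_ge n 4 with h4 | h4
      · have : n = 3 := by omega
        subst this
        norm_num at h2
      · have h8'' : (8:ℤ) ∣ 2^(n-1) := by
          calc (8:ℤ) = 2^3 := by norm_num
          _ ∣ 2^(n-1) := pow_dvd_pow 2 (by omega)
        have : (8:ℤ) ∣ 2 := by
          have := dvd_add h2 h8''
          simpa using this
        norm_num at this
    · obtain ⟨S, hS, hfac⟩ := odd_factor q hq ho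
      rw [hfac] at hj
      obtain ⟨t, ht⟩ := hS
      have hsplit : (q+1)*S - 2^(n-1) = (q + 1 - 2^(n-1))*S + 2^n * t := by
        rw [← hpow]; linear_combination (2:ℤ)^(n-1) * ht
      rw [hsplit] at hj
      have : (2:ℤ)^n ∣ (q + 1 - 2^(n-1))*S := (dvd_add_right (Dvd.intro t rfl)).1 (by
        convert hj using 1; exacts [rfl, by ring])
      exact (odd_coprime_pow n S ⟨t, ht⟩).dvd_of_dvd_mul_right this
  · intro h; exact ⟨1, by simpa using h⟩

theorem neg_one_in_powers_iff_iff_not_cong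
    (n : ℕ) (q : ℤ) (hn : 3 ≤ n) (hq : Odd q) :
    (((∃ j : ℕ, (q : ZMod (2 ^ n)) ^ j = -1) ↔
        (∃ j : ℕ, (q : ZMod (2 ^ n)) ^ j = -1 + 2 ^ (n - 1)))) ↔
      ¬ q ≡ -1 [ZMOD (2 ^ (n - 1))] := by
  have hpow : (2:ℤ)^(n-1) * 2 = 2^n := by
    rw [← pow_succ]; congr 1; omega
  have cast1 : ∀ j : ℕ, ((q : ZMod (2^n)) ^ j = -1) ↔ (2:ℤ)^n ∣ q ^ j + 1 := by
    intro j
    rw [show ((q : ZMod (2^n)) ^ j : ZMod (2^n)) = ((q^j : ℤ) : ZMod (2^n)) by push_cast; ring,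
      show (-1 : ZMod (2^n)) = ((-1 : ℤ) : ZMod (2^n)) by push_cast; ring,
      ZMod.intCast_eq_intCast_iff_dvd_sub]
    push_cast
    rw [show (-1 - q^j : ℤ) = -(q^j + 1) by ring, dvd_neg]
  have cast2 : ∀ j : ℕ, ((q : ZMod (2^n)) ^ j = -1 + 2 ^ (n-1)) ↔
      (2:ℤ)^n ∣ q ^ j + 1 - 2^(n-1) := by
    intro j
    rw [show ((q : ZMod (2^n)) ^ j : ZMod (2^n)) = ((q^j : ℤ) : ZMod (2^n)) by push_cast; ring,
      show (-1 + 2^(n-1) : ZMod (2^n)) = ((-1 + 2^(n-1) : ℤ) : ZMod (2^n)) by push_cast; ring,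
      ZMod.intCast_eq_intCast_iff_dvd_sub]
    push_cast
    rw [show (-1 + 2^(n-1) - q^j : ℤ) = -(q^j + 1 - 2^(n-1)) by ring, dvd_neg]
  rw [exists_congr cast1, exists_congr cast2, key_neg_one n hn q hq, key_other n hn q hq]
  set D1 := (2:ℤ)^n ∣ q + 1 with hD1
  set D2 := (2:ℤ)^n ∣ q + 1 - 2^(n-1) with hD2
  have hmod : q ≡ -1 [ZMOD (2 ^ (n-1))] ↔ (2:ℤ)^(n-1) ∣ q + 1 := by
    rw [Int.modEq_iff_dvd, show (-1 - q : ℤ) = -(q+1) by ring, dvd_neg]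
  have hnand : ¬ (D1 ∧ D2) := by
    rintro ⟨h1, h2⟩
    have hd : (2:ℤ)^n ∣ 2^(n-1) := by
      have := dvd_sub h1 h2
      simpa using this
    have hle := Int.le_of_dvd (by positivity) hd
    have : (2:ℤ)^(n-1) < 2^n := by
      apply pow_lt_pow_right₀ (by norm_num) (by omega)
    omega
  have hor : ((2:ℤ)^(n-1) ∣ q + 1) ↔ (D1 ∨ D2) := by
    constructor
    · rintro ⟨t, ht⟩
      rcases Int.even_or_odd t with ⟨s, hs⟩ | ⟨s, hs⟩
      · exact Or.inl ⟨s, by rw [ht, hs, ← hpow]; ring⟩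
      · exact Or.inr ⟨s, by rw [ht, hs, ← hpow]; ring⟩
    · rintro (h | h)
      · exact dvd_trans ⟨2, hpow.symm⟩ h
      · have := dvd_add (dvd_trans ⟨2, hpow.symm⟩ h) (dvd_refl ((2:ℤ)^(n-1)))
        simpa using this
  rw [hmod, hor]
  tauto
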